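/- Let z₀ ∈ ℂ, ε > 0, and Ω = {z ∈ ℂ : |z − z₀| ≤ ε}. Suppose f : Ω → ℂ is analytic and there are positive constants a, b, d with |f(z₀)| ≤ a, |f′(z₀)| ≥ b, sup_{z∈Ω}|f″(z)| ≤ d, and suppose a + dε² < εb and dε < cb with c < 1. Then there is a unique z ∈ Ω with f(z) = 0. -/

import Mathlib

/-- Quantitative Newton/contraction lemma: if `f` is analytic on the closed disk
`Ω = closedBall z₀ ε`, `|f z₀| ≤ a`, `|f' z₀| ≥ b`, `|f''| ≤ d` on `Ω`, and
`a + d ε² < ε b`, `d ε < c b` with `c < 1`, then `f` has a unique zero in `Ω`. -/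
theorem newton_unique_zero (z₀ : ℂ) (ε a b d c : ℝ)
    (hε : 0 < ε) (ha : 0 < a) (hb : 0 < b) (hd : 0 < d)
    (f : ℂ → ℂ) (hf : AnalyticOnNhd ℂ f (Metric.closedBall z₀ ε))
    (hfa : ‖f z₀‖ ≤ a) (hfb : b ≤ ‖deriv f z₀‖)
    (hfd : ∀ z ∈ Metric.closedBall z₀ ε, ‖iteratedDeriv 2 f z‖ ≤ d)
    (h1 : a + d * ε ^ 2 < ε * b) (h2 : d * ε < c * b) (hc : c < 1) :
    ∃! z, z ∈ Metric.closedBall z₀ ε ∧ f z = 0 := by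
  set Ω := Metric.closedBall z₀ ε with hΩ
  have hz₀Ω : z₀ ∈ Ω := Metric.mem_closedBall_self hε.le
  have hconv : Convex ℝ Ω := convex_closedBall z₀ ε
  have hf' : AnalyticOnNhd ℂ (deriv f) Ω := hf.deriv
  have hf'' : deriv (deriv f) = iteratedDeriv 2 f := by
    rw [iteratedDeriv_succ, iteratedDeriv_one]
  have hc0 : 0 < c := by nlinarith
  have hf'0 : deriv f z₀ ≠ 0 := by
    intro h; rw [h, norm_zero] at hfb; linarith
  -- deriv f is within dε of deriv f z₀ on Ω
  have key : ∀ z ∈ Ω, ‖deriv f z - deriv f z₀‖ ≤ d * ε := by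
    intro z hz
    have := hconv.norm_image_sub_le_of_norm_hasDerivWithin_le
      (f := deriv f) (f' := deriv (deriv f))
      (fun x hx => ((hf' x hx).differentiableAt.hasDerivAt).hasDerivWithinAt)
      (fun x hx => by rw [hf'']; exact hfd x hx) hz₀Ω hz
    calc ‖deriv f z - deriv f z₀‖ ≤ d * ‖z - z₀‖ := this
      _ ≤ d * ε := by
        have : ‖z - z₀‖ ≤ ε := by
          rw [← dist_eq_norm]; exact Metric.mem_closedBall.mp hz
        nlinarith
  -- Taylor-type estimate
  have taylor : ∀ z ∈ Ω, ∀ w ∈ Ω,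
      ‖f z - f w - deriv f z₀ * (z - w)‖ ≤ d * ε * ‖z - w‖ := by
    intro z hz w hw
    have := hconv.norm_image_sub_le_of_norm_hasDerivWithin_le
      (f := fun x => f x - deriv f z₀ * x) (f' := fun x => deriv f x - deriv f z₀)
      (fun x hx => by
        convert (((hf x hx).differentiableAt.hasDerivAt).sub
          ((hasDerivAt_id x).const_mul (deriv f z₀))).hasDerivWithinAt using 1 <;> simp [Pi.sub_def])
      (fun x hx => key x hx) hw hz
    calc ‖f z - f w - deriv f z₀ * (z - w)‖
        = ‖(f z - deriv f z₀ * z) - (f w - deriv f z₀ * w)‖ := by ring_nf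
      _ ≤ d * ε * ‖z - w‖ := this
  set g : ℂ → ℂ := fun z => z - f z / deriv f z₀ with hg
  -- g maps Ω into Ω
  have hmaps : Set.MapsTo g Ω Ω := by
    intro z hz
    have hzn : ‖z - z₀‖ ≤ ε := by rw [← dist_eq_norm]; exact Metric.mem_closedBall.mp hz
    have h3 : ‖f z - f z₀ - deriv f z₀ * (z - z₀)‖ ≤ d * ε * ‖z - z₀‖ := taylor z hz z₀ hz₀Ω
    have hgz : g z - z₀ = -((f z - f z₀ - deriv f z₀ * (z - z₀)) + f z₀) / deriv f z₀ := by
      simp only [hg]; field_simp; ring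
    have hnorm : ‖g z - z₀‖ ≤ (d * ε * ε + a) / b := by
      rw [hgz, norm_div, norm_neg]
      have hnum : ‖(f z - f z₀ - deriv f z₀ * (z - z₀)) + f z₀‖ ≤ d * ε * ε + a := by
        calc ‖(f z - f z₀ - deriv f z₀ * (z - z₀)) + f z₀‖
            ≤ ‖f z - f z₀ - deriv f z₀ * (z - z₀)‖ + ‖f z₀‖ := norm_add_le _ _
          _ ≤ d * ε * ε + a := by
              nlinarith [mul_le_mul_of_nonneg_left hzn (by positivity : (0:ℝ) ≤ d * ε)]
      exact div_le_div₀ (by positivity) hnum hb hfb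
    have : (d * ε * ε + a) / b ≤ ε := by
      rw [div_le_iff₀ hb]; nlinarith
    rw [hΩ, Metric.mem_closedBall, dist_eq_norm]
    linarith [hnorm]
  -- g is a contraction on Ω
  have hlip : ∀ z ∈ Ω, ∀ w ∈ Ω, ‖g z - g w‖ ≤ c * ‖z - w‖ := by
    intro z hz w hw
    have h3 := taylor z hz w hw
    have hgd : g z - g w = -(f z - f w - deriv f z₀ * (z - w)) / deriv f z₀ := by
      simp only [hg]; field_simp; ring
    rw [hgd, norm_div, norm_neg]
    have step : ‖f z - f w - deriv f z₀ * (z - w)‖ / ‖deriv f z₀‖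
        ≤ (d * ε * ‖z - w‖) / b := by
      apply div_le_div₀ (by positivity) h3 hb hfb
    have : d * ε * ‖z - w‖ / b ≤ c * ‖z - w‖ := by
      rw [div_le_iff₀ hb]; nlinarith [norm_nonneg (z - w)]
    linarith
  -- set up contraction on the subtype
  have hclosed : IsClosed Ω := Metric.isClosed_closedBall
  have : Nonempty Ω := ⟨⟨z₀, hz₀Ω⟩⟩
  haveI : CompleteSpace Ω := hclosed.completeSpace_coe
  set G : Ω → Ω := fun z => ⟨g z.1, hmaps z.2⟩ with hG
  have hK : (⟨c, hc0.le⟩ : NNReal) < 1 := by exact_mod_cast hc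
  have hcontr : ContractingWith ⟨c, hc0.le⟩ G := by
    refine ⟨hK, LipschitzWith.of_dist_le_mul fun x y => ?_⟩
    simp only [hG, Subtype.dist_eq, dist_eq_norm]
    exact hlip x.1 x.2 y.1 y.2
  set x := ContractingWith.fixedPoint G hcontr with hxdef
  have hx : Function.IsFixedPt G x := hcontr.fixedPoint_isFixedPt
  -- fixed points of g ↔ zeros of f
  have hiff : ∀ z : Ω, G z = z ↔ f z.1 = 0 := by
    intro z
    constructor
    · intro h
      have := congrArg Subtype.val h
      simp only [hG, hg] at this
      have : f z.1 / deriv f z₀ = 0 := by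
        have := sub_eq_iff_eq_add.mp this
        linear_combination -this
      exact (div_eq_zero_iff.mp this).resolve_right hf'0
    · intro h
      apply Subtype.ext
      simp [hG, hg, h]
  refine ⟨x.1, ⟨x.2, (hiff x).mp hx⟩, ?_⟩
  rintro y ⟨hyΩ, hy0⟩
  have : (⟨y, hyΩ⟩ : Ω) = x :=
    hcontr.fixedPoint_unique' ((hiff ⟨y, hyΩ⟩).mpr hy0) hx
  exact congrArg Subtype.val this
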